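/- For every α with 0 < α < 1/M, the mapping F is a contraction on the non-positive orthant (−∞,0]^N with respect to the sup norm: there exists a constant c with 0 ≤ c < 1 such that ‖F(x) − F(y)‖_∞ ≤ c·‖x − y‖_∞ for all x, y ∈ ℝ^N with all components non-positive. -/

import Mathlib

/-- The αβ-HMM log-belief-ratio mapping `F`, defined componentwise for `m = 1, …, M-1` by
`F_m(x) = log(((1 - αM)·exp(x_m) + α + α·Σ_n exp(x_n)) / (1 - αM + α + α·Σ_n exp(x_n)))`. -/
noncomputable def abHMM.F (α : ℝ) (M : ℕ) (x : Fin (M - 1) → ℝ) : Fin (M - 1) → ℝ :=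
  fun m => Real.log (((1 - α * M) * Real.exp (x m) + α + α * ∑ n, Real.exp (x n)) /
    (1 - α * M + α + α * ∑ n, Real.exp (x n)))

-- pure algebraic bound on the derivative expression
lemma bound_aux (β α t em Ss P dm : ℝ) (hβ : 0 < β) (hα : 0 < α) (ht : 0 ≤ t)
    (hem : 0 < em) (hem1 : em ≤ 1) (hSs : 0 ≤ Ss)
    (hdm : |dm| ≤ t) (hP : |P| ≤ t * Ss)
    (hB1 : β + α + α * Ss ≤ 1) :
    |(β * (em * dm) + α * P) / (β * em + α + α * Ss) - α * P / (β + α + α * Ss)| ≤ (1 - α) * t := by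
  set A := β * em + α + α * Ss with hA
  set B := β + α + α * Ss with hB
  have hApos : 0 < A := by positivity
  have hBpos : 0 < B := by positivity
  have hAB : A ≤ B := by
    have : β * em ≤ β := by nlinarith
    simp only [hA, hB]; linarith
  have hA1 : A ≤ 1 := le_trans hAB hB1
  have e1 : (β * (em * dm) + α * P) / A - α * P / B
      = β * (em * dm) / A + (α * P) * (1 / A - 1 / B) := by
    field_simp
    ring
  rw [e1]
  have hinv : 0 ≤ 1 / A - 1 / B := by
    rw [sub_nonneg]
    exact one_div_le_one_div_of_le hApos hAB
  have h1 : |β * (em * dm) / A| ≤ t * (β * em / A) := by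
    rw [abs_div, abs_of_pos hApos, ← mul_div_assoc]
    gcongr
    rw [abs_mul, abs_mul, abs_of_pos hβ, abs_of_pos hem]
    nlinarith [mul_le_mul_of_nonneg_left hdm (mul_pos hβ hem).le]
  have h2 : |(α * P) * (1 / A - 1 / B)| ≤ t * (α * Ss * (1 / A - 1 / B)) := by
    rw [abs_mul, abs_of_nonneg hinv, abs_mul, abs_of_pos hα]
    nlinarith [mul_le_mul_of_nonneg_right (mul_le_mul_of_nonneg_left hP hα.le) hinv]
  have key : β * em / A + α * Ss * (1 / A - 1 / B) = (β + α) / B - α / A := by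
    field_simp
    ring
  have hfinal : (β + α) / B - α / A ≤ 1 - α := by
    have k1 : (β + α) / B ≤ 1 := by
      rw [div_le_one hBpos, hB]; nlinarith
    have k2 : α ≤ α / A := by
      rw [le_div_iff₀ hApos]; nlinarith
    linarith
  calc |β * (em * dm) / A + (α * P) * (1 / A - 1 / B)|
      ≤ |β * (em * dm) / A| + |(α * P) * (1 / A - 1 / B)| := abs_add_le _ _
    _ ≤ t * (β * em / A) + t * (α * Ss * (1 / A - 1 / B)) := add_le_add h1 h2
    _ = t * (β * em / A + α * Ss * (1 / A - 1 / B)) := by ring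
    _ = t * ((β + α) / B - α / A) := by rw [key]
    _ ≤ t * (1 - α) := by
        apply mul_le_mul_of_nonneg_left hfinal ht
    _ = (1 - α) * t := mul_comm _ _

open Real Finset Set in
lemma abHMM.key (M : ℕ) (hM : 1 ≤ M) (α : ℝ) (hα : 0 < α) (hαM : α * M < 1)
    (x y : Fin (M - 1) → ℝ) (hx : ∀ m, x m ≤ 0) (hy : ∀ m, y m ≤ 0) (m : Fin (M - 1)) :
    |abHMM.F α M y m - abHMM.F α M x m| ≤ (1 - α) * ‖y - x‖ := by
  set β : ℝ := 1 - α * M with hβdef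
  have hβ : 0 < β := by rw [hβdef]; linarith
  set t := ‖y - x‖ with htdef
  have ht0 : 0 ≤ t := norm_nonneg _
  have htd : ∀ n, |y n - x n| ≤ t := by
    intro n
    have h := norm_le_pi_norm (y - x) n
    simpa [Real.norm_eq_abs] using h
  set S : ℝ → ℝ := fun s => ∑ n, Real.exp (x n + s * (y n - x n)) with hSdef
  set A : ℝ → ℝ := fun s => β * Real.exp (x m + s * (y m - x m)) + α + α * S s with hAdef
  set B : ℝ → ℝ := fun s => β + α + α * S s with hBdef
  set g : ℝ → ℝ := fun s => Real.log (A s) - Real.log (B s) with hgdef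
  set S' : ℝ → ℝ := fun s => ∑ n, Real.exp (x n + s * (y n - x n)) * (y n - x n) with hS'def
  have hSpos : ∀ s, 0 ≤ S s := fun s => Finset.sum_nonneg fun n _ => (Real.exp_pos _).le
  have hposgen : ∀ (e Sv : ℝ), 0 < e → 0 ≤ Sv → 0 < β * e + α + α * Sv := by
    intro e Sv he hSv
    nlinarith [mul_pos hβ he, mul_nonneg hα.le hSv]
  have hApos : ∀ s, 0 < A s := fun s => hposgen _ _ (Real.exp_pos _) (hSpos s)
  have hBpos : ∀ s, 0 < B s := by
    intro s
    have := hposgen 1 (S s) one_pos (hSpos s)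
    simpa using this
  -- arguments stay nonpositive on [0,1]
  have hargle : ∀ s ∈ Icc (0:ℝ) 1, ∀ n, x n + s * (y n - x n) ≤ 0 := by
    intro s hs n
    nlinarith [mul_nonneg hs.1 (neg_nonneg.2 (hy n)),
      mul_nonneg (sub_nonneg.2 hs.2) (neg_nonneg.2 (hx n)), hx n]
  have hexp1 : ∀ s ∈ Icc (0:ℝ) 1, ∀ n, Real.exp (x n + s * (y n - x n)) ≤ 1 := by
    intro s hs n
    calc Real.exp (x n + s * (y n - x n)) ≤ Real.exp 0 := Real.exp_le_exp.2 (hargle s hs n)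
      _ = 1 := Real.exp_zero
  have hcast : ((M - 1 : ℕ) : ℝ) ≤ (M : ℝ) - 1 := by
    rw [Nat.cast_sub hM]; simp
  have hSle : ∀ s ∈ Icc (0:ℝ) 1, S s ≤ (M : ℝ) - 1 := by
    intro s hs
    have h1 : S s ≤ ∑ _n : Fin (M-1), (1:ℝ) := Finset.sum_le_sum fun n _ => hexp1 s hs n
    have h2 : ∑ _n : Fin (M-1), (1:ℝ) = ((M - 1 : ℕ) : ℝ) := by
      simp
    linarith [hcast]
  have hB1 : ∀ s ∈ Icc (0:ℝ) 1, β + α + α * S s ≤ 1 := by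
    intro s hs
    have := mul_le_mul_of_nonneg_left (hSle s hs) hα.le
    rw [hβdef]
    nlinarith
  -- derivatives
  have hS' : ∀ s, HasDerivAt S (S' s) s := by
    intro s
    apply HasDerivAt.fun_sum
    intro n _
    have h1 : HasDerivAt (fun s : ℝ => x n + s * (y n - x n)) (y n - x n) s := by
      simpa using ((hasDerivAt_id s).mul_const (y n - x n)).const_add (x n)
    exact h1.exp
  have hA' : ∀ s, HasDerivAt A
      (β * (Real.exp (x m + s * (y m - x m)) * (y m - x m)) + α * S' s) s := by
    intro s
    have h1 : HasDerivAt (fun s : ℝ => x m + s * (y m - x m)) (y m - x m) s := by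
      simpa using ((hasDerivAt_id s).mul_const (y m - x m)).const_add (x m)
    exact ((h1.exp.const_mul β).add_const α).add ((hS' s).const_mul α)
  have hB' : ∀ s, HasDerivAt B (α * S' s) s := fun s =>
    ((hS' s).const_mul α).const_add (β + α)
  have hg' : ∀ s, HasDerivAt g
      ((β * (Real.exp (x m + s * (y m - x m)) * (y m - x m)) + α * S' s) / A s
        - α * S' s / B s) s := fun s =>
    ((hA' s).log (hApos s).ne').sub ((hB' s).log (hBpos s).ne')
  -- derivative bound
  have hbound : ∀ s ∈ Ico (0:ℝ) 1,
      ‖(β * (Real.exp (x m + s * (y m - x m)) * (y m - x m)) + α * S' s) / A s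
        - α * S' s / B s‖ ≤ (1 - α) * t := by
    intro s hs
    have hs' : s ∈ Icc (0:ℝ) 1 := Ico_subset_Icc_self hs
    have hP : |S' s| ≤ t * S s := by
      calc |S' s| ≤ ∑ n, |Real.exp (x n + s * (y n - x n)) * (y n - x n)| :=
            Finset.abs_sum_le_sum_abs _ _
        _ ≤ ∑ n, Real.exp (x n + s * (y n - x n)) * t := by
            apply Finset.sum_le_sum
            intro n _
            rw [abs_mul, abs_of_pos (Real.exp_pos _)]
            exact mul_le_mul_of_nonneg_left (htd n) (Real.exp_pos _).le
        _ = t * S s := by rw [← Finset.sum_mul, mul_comm]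
    rw [Real.norm_eq_abs]
    have := bound_aux β α t (Real.exp (x m + s * (y m - x m))) (S s) (S' s) (y m - x m)
      hβ hα ht0 (Real.exp_pos _) (hexp1 s hs' m) (hSpos s) (htd m) hP (hB1 s hs')
    simpa [hAdef, hBdef] using this
  have hmvt : ‖g 1 - g 0‖ ≤ (1 - α) * t :=
    norm_image_sub_le_of_norm_deriv_le_segment_01'
      (fun s _ => (hg' s).hasDerivWithinAt) hbound
  -- endpoints
  have harg1 : ∀ n : Fin (M-1), x n + (1:ℝ) * (y n - x n) = y n := fun n => by ring
  have harg0 : ∀ n : Fin (M-1), x n + (0:ℝ) * (y n - x n) = x n := fun n => by ring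
  have hg1 : g 1 = abHMM.F α M y m := by
    have hnum : 0 < β * Real.exp (y m) + α + α * ∑ n, Real.exp (y n) :=
      hposgen _ _ (Real.exp_pos _) (Finset.sum_nonneg fun n _ => (Real.exp_pos _).le)
    have hden : 0 < β + α + α * ∑ n, Real.exp (y n) := by
      have := hposgen 1 (∑ n, Real.exp (y n)) one_pos
        (Finset.sum_nonneg fun n _ => (Real.exp_pos _).le)
      simpa using this
    simp only [hgdef, hAdef, hBdef, hSdef, harg1, abHMM.F]
    rw [← hβdef, Real.log_div hnum.ne' hden.ne']
  have hg0 : g 0 = abHMM.F α M x m := by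
    have hnum : 0 < β * Real.exp (x m) + α + α * ∑ n, Real.exp (x n) :=
      hposgen _ _ (Real.exp_pos _) (Finset.sum_nonneg fun n _ => (Real.exp_pos _).le)
    have hden : 0 < β + α + α * ∑ n, Real.exp (x n) := by
      have := hposgen 1 (∑ n, Real.exp (x n)) one_pos
        (Finset.sum_nonneg fun n _ => (Real.exp_pos _).le)
      simpa using this
    simp only [hgdef, hAdef, hBdef, hSdef, harg0, abHMM.F]
    rw [← hβdef, Real.log_div hnum.ne' hden.ne']
  rw [← hg1, ← hg0, ← Real.norm_eq_abs]
  exact hmvt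

/-- for `0 < α < 1/M`, `F` is a contraction on the non-positive orthant
`(-∞,0]^N` with respect to the sup norm (the norm on the Pi type `Fin (M-1) → ℝ`). -/
theorem abHMM_contraction_on_nonpositive_orthant (M : ℕ) (hM : 2 ≤ M) (α : ℝ)
    (hα : 0 < α) (hα' : α < 1 / M) :
    ∃ c : ℝ, 0 ≤ c ∧ c < 1 ∧
      ∀ x y : Fin (M - 1) → ℝ, (∀ m, x m ≤ 0) → (∀ m, y m ≤ 0) →
        ‖abHMM.F α M x - abHMM.F α M y‖ ≤ c * ‖x - y‖ := by
  have hMpos : (0:ℝ) < M := by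
    have : (2:ℝ) ≤ M := by exact_mod_cast hM
    linarith
  have hαM : α * M < 1 := by
    rw [lt_div_iff₀ hMpos] at hα'
    linarith
  refine ⟨1 - α, ?_, by linarith, ?_⟩
  · have h2 : (2:ℝ) ≤ M := by exact_mod_cast hM
    nlinarith
  · intro x y hx hy
    have hc : (0:ℝ) ≤ (1 - α) * ‖x - y‖ := by
      have h2 : (2:ℝ) ≤ M := by exact_mod_cast hM
      have : 0 ≤ 1 - α := by nlinarith
      positivity
    rw [pi_norm_le_iff_of_nonneg hc]
    intro i
    have := abHMM.key M (by omega) α hα hαM y x hy hx i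
    simpa [Real.norm_eq_abs] using this
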